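/- Let w solve the backward-Euler scheme ∫_Ω w^k φ dx + τ∫_Ω K∇w^k·∇φ dx + τ∫_Γ b I(w^k) φ dS = ∫_Ω w^{k-1}φ dx + τ∫_Ω r^k φ dx + τ∫_Γ b θ_ext φ dS for all φ ∈ H¹(Ω), where K ≥ κ₀ > 0 (uniformly elliptic), b ≥ 0, θ_ext ≥ 0, r^k ≥ 0 a.e., I(w) = 0 for w ≤ 0, and w⁰ ≥ 0 a.e. Then w^k ≥ 0 a.e. in Ω for all k. -/

import Mathlib

open MeasureTheory

/-- Nonnegativity of the enthalpy in the backward-Euler scheme: if `w^k` solves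
the implicit scheme (tested by all `φ` in the admissible class `V`, which is stable under
taking negative parts, with the usual chain rules for gradient and trace), with uniformly
elliptic `K`, `b ≥ 0`, `θ_ext ≥ 0`, nonnegative heat sources `r^k ≥ 0`, `I(w) = 0` for
`w ≤ 0` and `w⁰ ≥ 0` a.e., then `w^k ≥ 0` a.e. for all `k`. -/
theorem stmt_17 {Ω Γ : Type*} [MeasureSpace Ω] [MeasureSpace Γ] (d : ℕ)
    (V : Set (Ω → ℝ))
    (grad : (Ω → ℝ) → Ω → EuclideanSpace ℝ (Fin d))
    (tr : (Ω → ℝ) → Γ → ℝ)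
    (hVneg : ∀ w ∈ V, (fun x => min (w x) 0) ∈ V)
    (hgradneg : ∀ w ∈ V, ∀ x,
      grad (fun x => min (w x) 0) x = if w x < 0 then grad w x else 0)
    (htrneg : ∀ w ∈ V, ∀ y, tr (fun x => min (w x) 0) y = min (tr w y) 0)
    (Kmat : Ω → EuclideanSpace ℝ (Fin d) →L[ℝ] EuclideanSpace ℝ (Fin d))
    (κ₀ : ℝ) (hκ₀ : 0 < κ₀)
    (hell : ∀ x ξ, κ₀ * ‖ξ‖ ^ 2 ≤ (inner ℝ (Kmat x ξ) ξ : ℝ))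
    (b : Γ → ℝ) (hb : ∀ y, 0 ≤ b y)
    (θext : Γ → ℝ) (hθ : ∀ y, 0 ≤ θext y)
    (Ifun : ℝ → ℝ) (hI : ∀ s : ℝ, s ≤ 0 → Ifun s = 0)
    (τ : ℝ) (hτ : 0 < τ)
    (w r : ℕ → Ω → ℝ)
    (hw0 : 0 ≤ᵐ[volume] w 0)
    (hr : ∀ k, 0 ≤ᵐ[volume] r k)
    (hwV : ∀ k, w k ∈ V)
    (hw2 : ∀ k, MemLp (w k) 2 volume)
    (heq : ∀ k : ℕ, ∀ φ ∈ V,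
      (∫ x, w (k + 1) x * φ x) +
          τ * (∫ x, (inner ℝ (Kmat x (grad (w (k + 1)) x)) (grad φ x) : ℝ)) +
          τ * (∫ y, b y * Ifun (tr (w (k + 1)) y) * tr φ y) =
        (∫ x, w k x * φ x) + τ * (∫ x, r (k + 1) x * φ x) +
          τ * (∫ y, b y * θext y * tr φ y)) :
    ∀ k, 0 ≤ᵐ[volume] w k := by
  intro k
  induction k with
  | zero => exact hw0
  | succ k ih =>
    set u := w (k + 1) with hu
    set φ : Ω → ℝ := fun x => min (u x) 0 with hφdef
    have hφV : φ ∈ V := hVneg _ (hwV (k + 1))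
    have key := heq k φ hφV
    -- φ ∈ L² and φ² integrable
    have hφ2 : MemLp φ 2 volume := by
      refine MemLp.of_le (hw2 (k + 1)) ?_ ?_
      · exact ((hw2 (k + 1)).aestronglyMeasurable.inf aestronglyMeasurable_const)
      · filter_upwards with x
        simp only [hφdef, Real.norm_eq_abs]
        rcases le_or_gt (u x) 0 with h | h
        · simp [min_eq_left h]; exact le_rfl
        · simp [min_eq_right h.le, abs_nonneg]
    have hsq : Integrable (fun x => φ x * φ x) volume := by
      have := hφ2.integrable_sq
      simpa [sq] using this
    -- first term equals ∫ φ²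
    have hA : (∫ x, u x * φ x) = ∫ x, φ x * φ x := by
      refine integral_congr_ae (Filter.Eventually.of_forall fun x => ?_)
      rcases le_or_gt (u x) 0 with h | h
      · simp [hφdef, min_eq_left h]
      · simp [hφdef, min_eq_right h.le]
    -- elliptic term is nonneg
    have hB : 0 ≤ ∫ x, (inner ℝ (Kmat x (grad u x)) (grad φ x) : ℝ) := by
      refine integral_nonneg fun x => ?_
      have h := hgradneg _ (hwV (k + 1)) x
      rw [show (fun x => min (u x) 0) = φ from rfl] at h
      rw [h, ← hu]
      by_cases hx : u x < 0
      · simp only [if_pos hx]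
        calc (0:ℝ) ≤ κ₀ * ‖grad u x‖ ^ 2 := by positivity
          _ ≤ _ := hell x _
      · simp [if_neg hx]
    -- boundary Ifun term vanishes
    have hC : (∫ y, b y * Ifun (tr u y) * tr φ y) = 0 := by
      have : (fun y => b y * Ifun (tr u y) * tr φ y) = fun _ => (0:ℝ) := by
        funext y
        have h := htrneg _ (hwV (k + 1)) y
        rw [show (fun x => min (u x) 0) = φ from rfl] at h
        rw [h]
        rcases le_or_gt (tr u y) 0 with hy | hy
        · rw [hI _ hy]; ring
        · rw [min_eq_right hy.le]; ring
      rw [this, integral_zero]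
    -- RHS terms nonpos
    have hφle : ∀ x, φ x ≤ 0 := fun x => min_le_right _ _
    have hD : (∫ x, w k x * φ x) ≤ 0 := by
      refine integral_nonpos_of_ae ?_
      filter_upwards [ih] with x hx
      exact mul_nonpos_of_nonneg_of_nonpos hx (hφle x)
    have hE : (∫ x, r (k + 1) x * φ x) ≤ 0 := by
      refine integral_nonpos_of_ae ?_
      filter_upwards [hr (k + 1)] with x hx
      exact mul_nonpos_of_nonneg_of_nonpos hx (hφle x)
    have hF : (∫ y, b y * θext y * tr φ y) ≤ 0 := by
      refine integral_nonpos fun y => ?_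
      have h := htrneg _ (hwV (k + 1)) y
      rw [show (fun x => min (u x) 0) = φ from rfl] at h
      rw [h]
      exact mul_nonpos_of_nonneg_of_nonpos (mul_nonneg (hb y) (hθ y)) (min_le_right _ _)
    -- combine
    have hAle : (∫ x, φ x * φ x) ≤ 0 := by
      rw [hA] at key
      nlinarith [mul_nonneg hτ.le hB]
    have hAzero : (∫ x, φ x * φ x) = 0 :=
      le_antisymm hAle (integral_nonneg fun x => mul_self_nonneg _)
    have hzero : (fun x => φ x * φ x) =ᵐ[volume] 0 :=
      (integral_eq_zero_iff_of_nonneg (fun x => mul_self_nonneg _) hsq).mp hAzero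
    filter_upwards [hzero] with x hx
    have hφ0 : φ x = 0 := mul_self_eq_zero.mp hx
    have : 0 ≤ u x := by
      by_contra h
      push_neg at h
      rw [hφdef] at hφ0
      simp only [min_eq_left h.le] at hφ0
      exact absurd hφ0 h.ne
    simpa using this
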